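/- Let n ≥ 1 and T ≥ n be integers, let U, Y be real data sequences of length T+1 with Σ_{U,Y} nonempty, and let σ ∈ ℂ. Suppose the two rank conditions hold: rank [H_n(U), 0, γ_n(σ); H_n(Y), γ_n(σ), 0] = rank [H_n(U), 0; H_n(Y), γ_n(σ)] and rank [H_n(U), 0; H_n(Y), γ_n(σ)] = rank [H_n(U); H_n(Y)] + 1. Then for any solution (ξ, M) ∈ ℂ^{T−n+1} × ℂ of the linear system H_n(U)·ξ = γ_n(σ), H_n(Y)·ξ = M·γ_n(σ), one has Σ_{U,Y} ⊆ Σ_{σ,M}, and this M is the unique complex number with that property. -/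

import Mathlib

open Matrix

/-- The Hankel matrix of depth `n` (over `ℂ`) of a real data sequence `u = (u 0, …, u T)`:
its `(i,j)` entry is `u (i+j)`. -/
noncomputable def hankelC (u : ℕ → ℝ) (n T : ℕ) : Matrix (Fin (n + 1)) (Fin (T - n + 1)) ℂ :=
  fun i j => (u ((i : ℕ) + (j : ℕ)) : ℂ)

/-- `γ_n(σ) = (1, σ, …, σ^n)ᵀ`. -/
noncomputable def gammaVec (n : ℕ) (σ : ℂ) : Fin (n + 1) → ℂ :=
  fun i => σ ^ (i : ℕ)

/-- A parameter row vector `θ = [q, -p] ∈ ℝ^{2n+1}` belongs to `Σ_{U,Y}`, i.e.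
`[q -p]·[H_n(U); H̄_n(Y)] = [y_n ⋯ y_T]`. -/
def inSigmaUY (n T : ℕ) (u y : ℕ → ℝ) (θ : Fin (2 * n + 1) → ℝ) : Prop :=
  ∀ j : Fin (T - n + 1),
    (∑ i : Fin (2 * n + 1),
      θ i * (if (i : ℕ) < n + 1 then u ((i : ℕ) + (j : ℕ))
             else y ((i : ℕ) - (n + 1) + (j : ℕ)))) = y (n + (j : ℕ))

/-- A parameter row vector `θ = [q, -p] ∈ ℝ^{2n+1}` belongs to `Σ_{σ,M}`, i.e.
`[q -p]·[γ_n(σ); M·γ_{n-1}(σ)] = M·σ^n`. -/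
def inSigmaM (n : ℕ) (σ M : ℂ) (θ : Fin (2 * n + 1) → ℝ) : Prop :=
  (∑ i : Fin (2 * n + 1),
    (θ i : ℂ) * (if (i : ℕ) < n + 1 then σ ^ (i : ℕ)
                 else M * σ ^ ((i : ℕ) - (n + 1)))) = M * σ ^ n

/-- The stacked matrix `[H_n(U); H_n(Y)]` over `ℂ`. -/
noncomputable def stackUY (u y : ℕ → ℝ) (n T : ℕ) :
    Matrix (Fin (n + 1) ⊕ Fin (n + 1)) (Fin (T - n + 1)) ℂ :=
  Matrix.fromRows (hankelC u n T) (hankelC y n T)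

/-- The column `(0; γ_n(σ))`. -/
noncomputable def colZeroGamma (n : ℕ) (σ : ℂ) :
    Matrix (Fin (n + 1) ⊕ Fin (n + 1)) (Fin 1) ℂ :=
  Matrix.of fun i _ => Sum.elim (fun _ : Fin (n + 1) => (0 : ℂ)) (fun k : Fin (n + 1) => σ ^ (k : ℕ)) i

/-- The column `(γ_n(σ); 0)`. -/
noncomputable def colGammaZero (n : ℕ) (σ : ℂ) :
    Matrix (Fin (n + 1) ⊕ Fin (n + 1)) (Fin 1) ℂ :=
  Matrix.of fun i _ => Sum.elim (fun k : Fin (n + 1) => σ ^ (k : ℕ)) (fun _ : Fin (n + 1) => (0 : ℂ)) i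

private lemma finsum_split {M : Type*} [AddCommMonoid M] (n : ℕ) (f : Fin (2*n+1) → M) :
    ∑ i, f i = (∑ i : Fin (n+1), f ⟨(i:ℕ), by omega⟩) + ∑ k : Fin n, f ⟨n+1+(k:ℕ), by omega⟩ := by
  have h : (n+1)+n = 2*n+1 := by omega
  rw [← Fin.sum_congr' f h, Fin.sum_univ_add]
  rfl

private lemma exists_mulVec_of_dot {N m' : Type*} [Fintype N] [Fintype m'] [DecidableEq N] [DecidableEq m']
    (A : Matrix N m' ℂ) (r : N → ℂ)
    (h : ∀ w : N → ℂ, w ᵥ* A = 0 → w ⬝ᵥ r = 0) :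
    ∃ ξ : m' → ℂ, A *ᵥ ξ = r := by
  by_contra hc
  push_neg at hc
  set W := LinearMap.range A.mulVecLin with hW
  have hr : r ∉ W := by
    rintro ⟨ξ, hξ⟩
    exact hc ξ (by simpa using hξ)
  have h0 : Submodule.Quotient.mk (p := W) r ≠ 0 := by
    simpa [Submodule.Quotient.mk_eq_zero] using hr
  obtain ⟨φ, hφ⟩ : ∃ φ : Module.Dual ℂ ((N → ℂ) ⧸ W), φ (Submodule.Quotient.mk r) ≠ 0 := by
    by_contra hall
    push_neg at hall
    exact h0 ((Module.forall_dual_apply_eq_zero_iff ℂ _).mp hall)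
  set ψ : Module.Dual ℂ (N → ℂ) := φ.comp W.mkQ with hψ
  have hψW : ∀ x ∈ W, ψ x = 0 := by
    intro x hx
    have : W.mkQ x = 0 := (Submodule.Quotient.mk_eq_zero W).2 hx
    simp [hψ, this]
  set w : N → ℂ := fun i => ψ (Pi.single i 1) with hwdef
  have hdot : ∀ x : N → ℂ, w ⬝ᵥ x = ψ x := by
    intro x
    have hsm : ∀ (i : N) (c : ℂ), (Pi.single i c : N → ℂ) = c • (Pi.single i 1 : N → ℂ) := by
      intro i c
      funext j
      simp [Pi.single_apply]
    have hx : x = ∑ i, (Pi.single i (x i) : N → ℂ) := by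
      funext j
      simp [Pi.single_apply, Finset.sum_apply]
    calc w ⬝ᵥ x = ∑ i, w i * x i := rfl
    _ = ∑ i, ψ (Pi.single i (x i)) := Finset.sum_congr rfl fun i _ => by
        rw [hsm i (x i), _root_.map_smul, smul_eq_mul]
        exact mul_comm _ _
    _ = ψ x := by rw [← map_sum, ← hx]
  have hker : w ᵥ* A = 0 := by
    funext j
    have hcol : (fun i => A i j) ∈ W := by
      refine ⟨Pi.single j 1, ?_⟩
      simp [Matrix.mulVecLin_apply, Matrix.mulVec_single]
      rfl
    calc (w ᵥ* A) j = w ⬝ᵥ (fun i => A i j) := rfl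
    _ = ψ (fun i => A i j) := hdot _
    _ = 0 := hψW _ hcol
  have hz := h w hker
  rw [hdot r] at hz
  exact hφ hz

private lemma rank_fromColumns_eq {m' n' : Type*} [Fintype m'] [Fintype n'] [DecidableEq m']
    (B : Matrix m' n' ℂ) (C : Matrix m' (Fin 1) ℂ) (ξ : n' → ℂ)
    (h : B *ᵥ ξ = fun i => C i 0) :
    (fromCols B C).rank = B.rank := by
  have hrange : LinearMap.range (fromCols B C).mulVecLin = LinearMap.range B.mulVecLin := by
    apply le_antisymm
    · rintro x ⟨v, rfl⟩
      refine ⟨(v ∘ Sum.inl) + v (Sum.inr 0) • ξ, ?_⟩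
      have hv : v = Sum.elim (v ∘ Sum.inl) (v ∘ Sum.inr) := (Sum.elim_comp_inl_inr v).symm
      rw [Matrix.mulVecLin_apply, Matrix.mulVecLin_apply, hv, fromCols_mulVec_sumElim,
        Matrix.mulVec_add, Matrix.mulVec_smul, h]
      congr 1
      funext i
      simp [Matrix.mulVec, dotProduct, Fin.sum_univ_one, mul_comm]
    · rintro x ⟨v, rfl⟩
      refine ⟨Sum.elim v 0, ?_⟩
      rw [Matrix.mulVecLin_apply, Matrix.mulVecLin_apply, fromCols_mulVec_sumElim]
      simp
  rw [Matrix.rank, Matrix.rank, hrange]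

private def thetaAC (n : ℕ) (a c : Fin (n+1) → ℝ) : Fin (2*n+1) → ℝ :=
  fun i => if h : (i:ℕ) < n+1 then a ⟨(i:ℕ), h⟩ else c ⟨(i:ℕ)-(n+1), by omega⟩

private lemma thetaAC_lt (n : ℕ) (a c : Fin (n+1) → ℝ) (i : Fin (n+1)) (h : (i:ℕ) < 2*n+1) :
    thetaAC n a c ⟨(i:ℕ), h⟩ = a i := by
  simp [thetaAC, Fin.is_lt, Fin.is_le]

private lemma thetaAC_ge (n : ℕ) (a c : Fin (n+1) → ℝ) (k : Fin n) (h : n+1+(k:ℕ) < 2*n+1) :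
    thetaAC n a c ⟨n+1+(k:ℕ), h⟩ = c (Fin.castSucc k) := by
  have h1 : ¬ (n+1+(k:ℕ) < n+1) := by omega
  simp only [thetaAC, dif_neg h1]
  congr 1
  ext
  simp

private lemma sigmaUY_iff (n T : ℕ) (u y : ℕ → ℝ) (θ : Fin (2*n+1) → ℝ) :
    inSigmaUY n T u y θ ↔ ∀ j : Fin (T-n+1),
      (∑ i : Fin (n+1), θ ⟨(i:ℕ), by omega⟩ * u ((i:ℕ)+(j:ℕ)))
        + ∑ k : Fin n, θ ⟨n+1+(k:ℕ), by omega⟩ * y ((k:ℕ)+(j:ℕ)) = y (n+(j:ℕ)) := by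
  unfold inSigmaUY
  refine forall_congr' fun j => ?_
  rw [finsum_split n (fun i => θ i * (if (i:ℕ) < n+1 then u ((i:ℕ)+(j:ℕ)) else y ((i:ℕ)-(n+1)+(j:ℕ))))]
  have h1 : ∀ k : Fin n, ¬ (n+1+(k:ℕ) < n+1) := fun k => by omega
  simp [h1, Nat.add_sub_cancel_left, Fin.is_lt, Fin.is_le]

private lemma star_split (n : ℕ) (σ : ℂ) (θ : Fin (2*n+1) → ℝ) :
    (∑ i : Fin (2*n+1), (θ i:ℂ) * (if (i:ℕ) < n+1 then 0 else σ^((i:ℕ)-(n+1))))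
      = ∑ k : Fin n, (θ ⟨n+1+(k:ℕ), by omega⟩ : ℂ) * σ^(k:ℕ) := by
  rw [finsum_split n (fun i => (θ i:ℂ) * (if (i:ℕ) < n+1 then 0 else σ^((i:ℕ)-(n+1))))]
  have h1 : ∀ k : Fin n, ¬ (n+1+(k:ℕ) < n+1) := fun k => by omega
  simp [h1, Nat.add_sub_cancel_left, Fin.is_lt, Fin.is_le]

set_option maxHeartbeats 1000000 in
/-- Under the two rank conditions (and nonemptiness of `Σ_{U,Y}`),
any solution `(ξ, M)` of `H_n(U)·ξ = γ_n(σ)`, `H_n(Y)·ξ = M·γ_n(σ)` yields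
`Σ_{U,Y} ⊆ Σ_{σ,M}`, and this `M` is the unique complex number with that property. -/
theorem unique_value_from_solution (n T : ℕ) (hn : 1 ≤ n) (hT : n ≤ T)
    (u y : ℕ → ℝ) (σ : ℂ)
    (hne : ∃ θ : Fin (2 * n + 1) → ℝ, inSigmaUY n T u y θ)
    (hrank1 : (Matrix.fromCols (Matrix.fromCols (stackUY u y n T) (colZeroGamma n σ))
          (colGammaZero n σ)).rank =
        (Matrix.fromCols (stackUY u y n T) (colZeroGamma n σ)).rank)
    (hrank2 : (Matrix.fromCols (stackUY u y n T) (colZeroGamma n σ)).rank =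
        (stackUY u y n T).rank + 1) :
    ∀ (ξ : Fin (T - n + 1) → ℂ) (M : ℂ),
      (hankelC u n T).mulVec ξ = gammaVec n σ →
      (hankelC y n T).mulVec ξ = M • gammaVec n σ →
      (∀ θ : Fin (2 * n + 1) → ℝ, inSigmaUY n T u y θ → inSigmaM n σ M θ) ∧
      (∀ M' : ℂ,
        (∀ θ : Fin (2 * n + 1) → ℝ, inSigmaUY n T u y θ → inSigmaM n σ M' θ) → M' = M) := by
  intro ξ M hU hY
  have hnlt : n < n + 1 := Nat.lt_succ_self n
  have hUi : ∀ i : Fin (n+1), (∑ j : Fin (T-n+1), (u ((i:ℕ)+(j:ℕ)) : ℂ) * ξ j) = σ ^ (i:ℕ) := by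
    intro i
    have := congrFun hU i
    simpa [hankelC, Matrix.mulVec, dotProduct, gammaVec] using this
  have hYi : ∀ i : Fin (n+1), (∑ j : Fin (T-n+1), (y ((i:ℕ)+(j:ℕ)) : ℂ) * ξ j) = M * σ ^ (i:ℕ) := by
    intro i
    have := congrFun hY i
    simpa [hankelC, Matrix.mulVec, dotProduct, gammaVec, smul_eq_mul] using this
  -- Part 1
  have part1 : ∀ θ : Fin (2*n+1) → ℝ, inSigmaUY n T u y θ → inSigmaM n σ M θ := by
    intro θ hθ
    unfold inSigmaM
    have key : ∀ i : Fin (2*n+1),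
        ((if (i:ℕ) < n+1 then σ ^ (i:ℕ) else M * σ ^ ((i:ℕ)-(n+1))) : ℂ)
          = ∑ j : Fin (T-n+1), (if (i:ℕ) < n+1 then (u ((i:ℕ)+(j:ℕ)) : ℂ) else (y ((i:ℕ)-(n+1)+(j:ℕ)) : ℂ)) * ξ j := by
      intro i
      by_cases hi : (i:ℕ) < n+1
      · simp only [if_pos hi]
        exact (hUi ⟨(i:ℕ), hi⟩).symm
      · have h2 : (i:ℕ) - (n+1) < n+1 := by omega
        simp only [if_neg hi]
        exact (hYi ⟨(i:ℕ)-(n+1), h2⟩).symm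
    calc ∑ i : Fin (2*n+1), (θ i:ℂ) * (if (i:ℕ) < n+1 then σ ^ (i:ℕ) else M * σ ^ ((i:ℕ)-(n+1)))
        = ∑ i : Fin (2*n+1), ∑ j : Fin (T-n+1),
            (θ i:ℂ) * ((if (i:ℕ) < n+1 then (u ((i:ℕ)+(j:ℕ)) : ℂ) else (y ((i:ℕ)-(n+1)+(j:ℕ)) : ℂ)) * ξ j) := by
          refine Finset.sum_congr rfl fun i _ => ?_
          rw [key i, Finset.mul_sum]
      _ = ∑ j : Fin (T-n+1), ∑ i : Fin (2*n+1),
            (θ i:ℂ) * ((if (i:ℕ) < n+1 then (u ((i:ℕ)+(j:ℕ)) : ℂ) else (y ((i:ℕ)-(n+1)+(j:ℕ)) : ℂ)) * ξ j) :=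
          Finset.sum_comm
      _ = ∑ j : Fin (T-n+1), ((y (n+(j:ℕ)) : ℝ) : ℂ) * ξ j := by
          refine Finset.sum_congr rfl fun j _ => ?_
          have hcast : ((∑ i : Fin (2*n+1),
              θ i * (if (i:ℕ) < n+1 then u ((i:ℕ)+(j:ℕ)) else y ((i:ℕ)-(n+1)+(j:ℕ))) : ℝ) : ℂ)
              = ∑ i : Fin (2*n+1),
                (θ i:ℂ) * (if (i:ℕ) < n+1 then (u ((i:ℕ)+(j:ℕ)) : ℂ) else (y ((i:ℕ)-(n+1)+(j:ℕ)) : ℂ)) := by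
            push_cast [apply_ite (fun r : ℝ => (r:ℂ))]
            rfl
          rw [← hθ j, hcast, Finset.sum_mul]
          exact Finset.sum_congr rfl fun i _ => (mul_assoc _ _ _).symm
      _ = M * σ ^ n := by simpa using hYi ⟨n, hnlt⟩
  refine ⟨part1, ?_⟩
  intro M' hM'
  by_contra hne'
  have hMM : M - M' ≠ 0 := sub_ne_zero.mpr (Ne.symm hne')
  have hstar : ∀ θ : Fin (2*n+1) → ℝ, inSigmaUY n T u y θ →
      (∑ k : Fin n, (θ ⟨n+1+(k:ℕ), by omega⟩ : ℂ) * σ^(k:ℕ)) = σ^n := by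
    intro θ hθ
    have h1 := part1 θ hθ
    have h2 := hM' θ hθ
    unfold inSigmaM at h1 h2
    have h3 : (M - M') * (∑ i : Fin (2*n+1), (θ i:ℂ) * (if (i:ℕ) < n+1 then 0 else σ^((i:ℕ)-(n+1))))
        = (M - M') * σ^n := by
      rw [Finset.mul_sum]
      have e : ∀ i : Fin (2*n+1),
          (M - M') * ((θ i:ℂ) * (if (i:ℕ) < n+1 then 0 else σ^((i:ℕ)-(n+1))))
            = (θ i:ℂ) * (if (i:ℕ) < n+1 then σ^(i:ℕ) else M * σ^((i:ℕ)-(n+1)))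
              - (θ i:ℂ) * (if (i:ℕ) < n+1 then σ^(i:ℕ) else M' * σ^((i:ℕ)-(n+1))) := by
        intro i
        by_cases hi : (i:ℕ) < n+1 <;> simp only [if_pos, if_neg, hi, if_true, if_false] <;> ring
      rw [Finset.sum_congr rfl fun i _ => e i, Finset.sum_sub_distrib, h1, h2]
      ring
    have h4 := mul_left_cancel₀ hMM h3
    rw [star_split] at h4
    exact h4
  obtain ⟨θ₀, hθ₀⟩ := hne
  -- the key real-coefficient claim
  have real_case : ∀ a c : Fin (n+1) → ℝ,
      (∀ j : Fin (T-n+1),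
        (∑ i : Fin (n+1), a i * u ((i:ℕ)+(j:ℕ))) + (∑ i : Fin (n+1), c i * y ((i:ℕ)+(j:ℕ))) = 0) →
      (∑ i : Fin (n+1), (c i : ℂ) * σ^(i:ℕ)) = 0 := by
    intro a c hker
    have hker' : ∀ j : Fin (T-n+1),
        (∑ i : Fin (n+1), a i * u ((i:ℕ)+(j:ℕ)))
          + ((∑ k : Fin n, c (Fin.castSucc k) * y ((k:ℕ)+(j:ℕ))) + c (Fin.last n) * y (n+(j:ℕ))) = 0 := by
      intro j
      have hj := hker j
      rw [Fin.sum_univ_castSucc (f := fun i : Fin (n+1) => c i * y ((i:ℕ)+(j:ℕ)))] at hj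
      simpa using hj
    by_cases hcn : c (Fin.last n) = 0
    · -- last coefficient zero: perturb θ₀
      have hθ₁ : inSigmaUY n T u y (θ₀ + thetaAC n a c) := by
        rw [sigmaUY_iff]
        intro j
        have h0 := (sigmaUY_iff n T u y θ₀).mp hθ₀ j
        have hkj := hker' j
        rw [hcn, zero_mul, add_zero] at hkj
        simp only [Pi.add_apply, thetaAC_lt, thetaAC_ge, add_mul]
        rw [Finset.sum_add_distrib, Finset.sum_add_distrib]
        linarith [h0, hkj]
      have hs0 := hstar θ₀ hθ₀
      have hs1 := hstar _ hθ₁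
      simp only [Pi.add_apply, thetaAC_ge] at hs1
      push_cast at hs1
      simp only [add_mul] at hs1
      rw [Finset.sum_add_distrib, hs0] at hs1
      have hc0 : (∑ k : Fin n, (c (Fin.castSucc k) : ℂ) * σ^(k:ℕ)) = 0 := by
        linear_combination hs1
      rw [Fin.sum_univ_castSucc (f := fun i : Fin (n+1) => (c i : ℂ) * σ^(i:ℕ))]
      simp only [Fin.coe_castSucc, Fin.val_last, hcn]
      rw [hc0]
      simp
    · -- last coefficient nonzero: divide
      have hθ : inSigmaUY n T u y
          (thetaAC n (fun i => -a i / c (Fin.last n)) (fun i => -c i / c (Fin.last n))) := by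
        rw [sigmaUY_iff]
        intro j
        have hkj := hker' j
        simp only [thetaAC_lt, thetaAC_ge]
        have e1 : ∀ i : Fin (n+1),
            -a i / c (Fin.last n) * u ((i:ℕ)+(j:ℕ)) = -(a i * u ((i:ℕ)+(j:ℕ))) / c (Fin.last n) :=
          fun i => by ring
        have e2 : ∀ k : Fin n,
            -c (Fin.castSucc k) / c (Fin.last n) * y ((k:ℕ)+(j:ℕ))
              = -(c (Fin.castSucc k) * y ((k:ℕ)+(j:ℕ))) / c (Fin.last n) :=
          fun k => by ring
        rw [Finset.sum_congr rfl fun i _ => e1 i, Finset.sum_congr rfl fun k _ => e2 k,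
          ← Finset.sum_div, ← Finset.sum_div, ← add_div, div_eq_iff hcn,
          Finset.sum_neg_distrib, Finset.sum_neg_distrib]
        linarith [hkj]
      have hs := hstar _ hθ
      simp only [thetaAC_ge] at hs
      push_cast at hs
      have e3 : ∀ k : Fin n,
          -(c (Fin.castSucc k) : ℂ) / (c (Fin.last n) : ℂ) * σ^(k:ℕ)
            = -((c (Fin.castSucc k) : ℂ) * σ^(k:ℕ)) / (c (Fin.last n) : ℂ) :=
        fun k => by ring
      have hcnC : (c (Fin.last n) : ℂ) ≠ 0 := Complex.ofReal_ne_zero.mpr hcn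
      rw [Finset.sum_congr rfl fun k _ => e3 k, ← Finset.sum_div, div_eq_iff hcnC,
        Finset.sum_neg_distrib] at hs
      rw [Fin.sum_univ_castSucc (f := fun i : Fin (n+1) => (c i : ℂ) * σ^(i:ℕ))]
      simp only [Fin.coe_castSucc, Fin.val_last]
      linear_combination -hs
  -- from real case to arbitrary complex left-kernel vectors
  have hker_dot : ∀ w : (Fin (n+1) ⊕ Fin (n+1)) → ℂ,
      w ᵥ* (stackUY u y n T) = 0 → w ⬝ᵥ (fun i => colZeroGamma n σ i 0) = 0 := by
    intro w hw
    have hw' : ∀ j : Fin (T-n+1),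
        (∑ i : Fin (n+1), w (Sum.inl i) * (u ((i:ℕ)+(j:ℕ)) : ℂ))
          + (∑ i : Fin (n+1), w (Sum.inr i) * (y ((i:ℕ)+(j:ℕ)) : ℂ)) = 0 := by
      intro j
      have := congrFun hw j
      simpa [Matrix.vecMul, dotProduct, stackUY, Matrix.fromRows_apply_inl, Matrix.fromRows_apply_inr, hankelC,
        Fintype.sum_sum_type] using this
    have hre : ∀ j : Fin (T-n+1),
        (∑ i : Fin (n+1), (w (Sum.inl i)).re * u ((i:ℕ)+(j:ℕ)))
          + (∑ i : Fin (n+1), (w (Sum.inr i)).re * y ((i:ℕ)+(j:ℕ))) = 0 := by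
      intro j
      have := congrArg Complex.re (hw' j)
      simpa [Complex.re_sum, Complex.mul_re] using this
    have him : ∀ j : Fin (T-n+1),
        (∑ i : Fin (n+1), (w (Sum.inl i)).im * u ((i:ℕ)+(j:ℕ)))
          + (∑ i : Fin (n+1), (w (Sum.inr i)).im * y ((i:ℕ)+(j:ℕ))) = 0 := by
      intro j
      have := congrArg Complex.im (hw' j)
      simpa [Complex.im_sum, Complex.mul_im] using this
    have h1 := real_case (fun i => (w (Sum.inl i)).re) (fun i => (w (Sum.inr i)).re) hre
    have h2 := real_case (fun i => (w (Sum.inl i)).im) (fun i => (w (Sum.inr i)).im) him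
    calc w ⬝ᵥ (fun i => colZeroGamma n σ i 0)
        = ∑ i : Fin (n+1), w (Sum.inr i) * σ^(i:ℕ) := by
          simp [dotProduct, Fintype.sum_sum_type, colZeroGamma]
      _ = (∑ i : Fin (n+1), ((w (Sum.inr i)).re : ℂ) * σ^(i:ℕ))
            + (∑ i : Fin (n+1), ((w (Sum.inr i)).im : ℂ) * σ^(i:ℕ)) * Complex.I := by
          rw [Finset.sum_mul, ← Finset.sum_add_distrib]
          refine Finset.sum_congr rfl fun i _ => ?_
          linear_combination (σ^(i:ℕ)) * (Complex.re_add_im (w (Sum.inr i))).symm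
      _ = 0 := by rw [h1, h2]; simp
  obtain ⟨ξ'', hξ''⟩ := exists_mulVec_of_dot (stackUY u y n T)
    (fun i => colZeroGamma n σ i 0) hker_dot
  have hrk := rank_fromColumns_eq (stackUY u y n T) (colZeroGamma n σ) ξ'' hξ''
  omega
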